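/- Let X be a Tychonoff (completely regular Hausdorff) space and let Y be a metrizable space that contains an arc (a subspace homeomorphic to the closed unit interval [0,1]). The following are equivalent for C(X,Y) equipped with the graph topology τ_Γ: (1) (C(X,Y), τ_Γ) is metrizable; (2) (C(X,Y), τ_Γ) is first countable; (3) (C(X,Y), τ_Γ) is a Fréchet–Urysohn space; (4) (C(X,Y), τ_Γ) has countable tightness; (5) X is countably compact. -/

import Mathlib

open TopologicalSpace Set

/-- The graph of a continuous map, as a subset of `X × Y`. -/
def graphSet {X Y : Type*} [TopologicalSpace X] [TopologicalSpace Y] (f : C(X, Y)) :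
    Set (X × Y) := {p | p.2 = f p.1}

/-- The graph topology `τ_Γ` on `C(X, Y)`, generated by the sets
`F_G = {f | graph f ⊆ G}` for `G` open in `X × Y`. -/
def graphTopology (X Y : Type*) [TopologicalSpace X] [TopologicalSpace Y] :
    TopologicalSpace C(X, Y) :=
  generateFrom {S | ∃ G : Set (X × Y), IsOpen G ∧ S = {f : C(X, Y) | graphSet f ⊆ G}}

/-- A topological space is countably compact if every countable open cover has a
finite subcover. -/
def CountablyCompact (X : Type*) [TopologicalSpace X] : Prop :=
  ∀ U : ℕ → Set X, (∀ n, IsOpen (U n)) → (⋃ n, U n) = Set.univ →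
    ∃ t : Finset ℕ, (⋃ n ∈ t, U n) = Set.univ

/-- A topological space has countable tightness if every point in the closure of a
set `A` lies in the closure of a countable subset of `A`. -/
def CountableTightness (Z : Type*) [TopologicalSpace Z] : Prop :=
  ∀ (A : Set Z) (z : Z), z ∈ closure A → ∃ B ⊆ A, B.Countable ∧ z ∈ closure B

open Topology

section Aux

variable {X Y : Type*} [TopologicalSpace X] [TopologicalSpace Y]

theorem graphSet_subset_iff {f : C(X, Y)} {G : Set (X × Y)} :
    graphSet f ⊆ G ↔ ∀ x, (x, f x) ∈ G := by
  constructor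
  · intro h x
    exact h (show ((x, f x) : X × Y) ∈ graphSet f from rfl)
  · rintro h ⟨x, y⟩ (hy : y = f x)
    rw [hy]; exact h x

theorem isOpen_graph_basic {G : Set (X × Y)} (hG : IsOpen G) :
    IsOpen[graphTopology X Y] {f : C(X, Y) | graphSet f ⊆ G} :=
  isOpen_generateFrom_of_mem ⟨G, hG, rfl⟩

theorem exists_basic_subset {s : Set C(X, Y)} (hs : IsOpen[graphTopology X Y] s) :
    ∀ f ∈ s, ∃ G : Set (X × Y), IsOpen G ∧ graphSet f ⊆ G ∧
      {g : C(X, Y) | graphSet g ⊆ G} ⊆ s := by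
  induction hs with
  | basic u hu =>
      obtain ⟨G, hG, rfl⟩ := hu
      exact fun f hf => ⟨G, hG, hf, fun g hg => hg⟩
  | univ => exact fun f _ => ⟨univ, isOpen_univ, subset_univ _, subset_univ _⟩
  | inter u v _ _ ihu ihv =>
      rintro f ⟨hfu, hfv⟩
      obtain ⟨G₁, h1, h2, h3⟩ := ihu f hfu
      obtain ⟨G₂, h4, h5, h6⟩ := ihv f hfv
      exact ⟨G₁ ∩ G₂, h1.inter h4, subset_inter h2 h5,
        fun g hg => ⟨h3 fun p hp => (hg hp).1, h6 fun p hp => (hg hp).2⟩⟩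
  | sUnion S _ ih =>
      rintro f ⟨u, huS, hfu⟩
      obtain ⟨G, h1, h2, h3⟩ := ih u huS f hfu
      exact ⟨G, h1, h2, h3.trans (subset_sUnion_of_mem huS)⟩

end Aux

section Metric

variable {X : Type*} [TopologicalSpace X] {Y : Type*} [MetricSpace Y]

noncomputable def gDist (f g : C(X, Y)) : ℝ := ⨆ x, min (dist (f x) (g x)) 1

theorem gDist_bdd (f g : C(X, Y)) :
    BddAbove (Set.range fun x => min (dist (f x) (g x)) 1) := by
  refine ⟨1, ?_⟩
  rintro y ⟨x, rfl⟩
  exact min_le_right _ _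

theorem le_gDist (f g : C(X, Y)) (x : X) : min (dist (f x) (g x)) 1 ≤ gDist f g :=
  le_ciSup (gDist_bdd f g) x

theorem gDist_nonneg (f g : C(X, Y)) : 0 ≤ gDist f g :=
  Real.iSup_nonneg fun x => le_min dist_nonneg zero_le_one

theorem gDist_self (f : C(X, Y)) : gDist f f = 0 := by
  refine le_antisymm (Real.iSup_le (fun x => by simp) le_rfl) (gDist_nonneg f f)

theorem gDist_comm (f g : C(X, Y)) : gDist f g = gDist g f := by
  unfold gDist
  congr 1; funext x; rw [dist_comm]

theorem min1_add {a b : ℝ} (ha : 0 ≤ a) (hb : 0 ≤ b) :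
    min (a + b) 1 ≤ min a 1 + min b 1 := by
  rcases le_or_gt 1 a with h | h
  · have : min a 1 = 1 := min_eq_right h
    rw [this]
    have : min b 1 ≥ 0 := le_min hb zero_le_one
    nlinarith [min_le_right (a + b) 1]
  · rcases le_or_gt 1 b with h' | h'
    · have : min b 1 = 1 := min_eq_right h'
      rw [this]
      have : min a 1 ≥ 0 := le_min ha zero_le_one
      nlinarith [min_le_right (a + b) 1]
    · rw [min_eq_left h.le, min_eq_left h'.le]
      exact min_le_left _ _

theorem gDist_triangle (f g h : C(X, Y)) : gDist f h ≤ gDist f g + gDist g h := by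
  refine Real.iSup_le (fun x => ?_) (add_nonneg (gDist_nonneg f g) (gDist_nonneg g h))
  calc min (dist (f x) (h x)) 1 ≤ min (dist (f x) (g x) + dist (g x) (h x)) 1 :=
        min_le_min (dist_triangle _ _ _) le_rfl
    _ ≤ min (dist (f x) (g x)) 1 + min (dist (g x) (h x)) 1 :=
        min1_add dist_nonneg dist_nonneg
    _ ≤ gDist f g + gDist g h := add_le_add (le_gDist f g x) (le_gDist g h x)

theorem gDist_eq_zero (f g : C(X, Y)) (h : gDist f g = 0) : f = g := by
  ext x
  have h1 : min (dist (f x) (g x)) 1 ≤ 0 := h ▸ le_gDist f g x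
  have h2 : (0:ℝ) ≤ min (dist (f x) (g x)) 1 := le_min dist_nonneg zero_le_one
  have h3 : min (dist (f x) (g x)) 1 = 0 := le_antisymm h1 h2
  have h4 : dist (f x) (g x) = 0 := by
    rcases min_eq_iff.1 h3 with ⟨h5, _⟩ | ⟨h5, _⟩
    · exact h5
    · norm_num at h5
  exact eq_of_dist_eq_zero h4

theorem tube_lemma (hX : CountablyCompact X) (f : C(X, Y)) {G : Set (X × Y)}
    (hG : IsOpen G) (hfG : graphSet f ⊆ G) :
    ∃ ε : ℝ, 0 < ε ∧ ε ≤ 1 ∧ ∀ g : C(X, Y), (∀ x, dist (f x) (g x) < ε) → graphSet g ⊆ G := by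
  have key : ∀ x : X, ∃ ε : ℝ, 0 < ε ∧ ∃ U : Set X, IsOpen U ∧ x ∈ U ∧
      ∀ x' ∈ U, ∀ y : Y, dist y (f x') < ε → (x', y) ∈ G := by
    intro x
    have hx : (x, f x) ∈ G := graphSet_subset_iff.1 hfG x
    rcases isOpen_prod_iff.1 hG x (f x) hx with ⟨u, v, hu, hv, hxu, hfv, huv⟩
    rcases Metric.isOpen_iff.1 hv (f x) hfv with ⟨r, hr, hball⟩
    refine ⟨r / 2, by linarith, u ∩ f ⁻¹' Metric.ball (f x) (r / 2),
      hu.inter (Metric.isOpen_ball.preimage f.continuous), ⟨hxu, by simp [Metric.mem_ball, hr]⟩, ?_⟩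
    rintro x' ⟨hx'u, hx'b⟩ y hy
    have hb : dist (f x') (f x) < r / 2 := by simpa [Metric.mem_ball] using hx'b
    have : dist y (f x) < r :=
      (dist_triangle y (f x') (f x)).trans_lt (by linarith)
    exact huv ⟨hx'u, hball this⟩
  choose ε hε U hUopen hxU hU using key
  set W : ℕ → Set X := fun n => ⋃ (x : X) (_ : 1 / (n + 1 : ℝ) < ε x), U x with hW
  have hWopen : ∀ n, IsOpen (W n) := fun n => isOpen_biUnion fun x _ => hUopen x
  have hWcover : (⋃ n, W n) = univ := by
    refine eq_univ_of_forall fun x => ?_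
    obtain ⟨n, hn⟩ := exists_nat_one_div_lt (hε x)
    exact mem_iUnion.2 ⟨n, mem_iUnion₂.2 ⟨x, hn, hxU x⟩⟩
  obtain ⟨t, ht⟩ := hX W hWopen hWcover
  set N := t.sup id with hN
  have hWmono : ∀ n ∈ t, W n ⊆ W N := by
    intro n hn z hz
    obtain ⟨x, hx1, hx2⟩ := mem_iUnion₂.1 hz
    refine mem_iUnion₂.2 ⟨x, lt_of_le_of_lt ?_ hx1, hx2⟩
    have hnN : (n : ℝ) ≤ N := by exact_mod_cast Finset.le_sup (f := id) hn
    apply one_div_le_one_div_of_le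
    · positivity
    · linarith
  have hWN : ∀ x : X, x ∈ W N := by
    intro x
    have : x ∈ ⋃ n ∈ t, W n := ht ▸ mem_univ x
    obtain ⟨n, hn, hx⟩ := mem_iUnion₂.1 this
    exact hWmono n hn hx
  refine ⟨1 / (N + 1 : ℝ), by positivity, by rw [div_le_one] <;> linarith, ?_⟩
  intro g hg
  rw [graphSet_subset_iff]
  intro x'
  obtain ⟨x, hx1, hx2⟩ := mem_iUnion₂.1 (hWN x')
  refine hU x x' hx2 (g x') ?_
  calc dist (g x') (f x') = dist (f x') (g x') := dist_comm _ _
    _ < 1 / (N + 1 : ℝ) := hg x'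
    _ < ε x := hx1

theorem isOpen_graphTopology_iff (hX : CountablyCompact X) (s : Set C(X, Y)) :
    IsOpen[graphTopology X Y] s ↔ ∀ f ∈ s, ∃ ε > 0, ∀ g, gDist f g < ε → g ∈ s := by
  constructor
  · intro hs f hf
    obtain ⟨G, hG, hfG, hsub⟩ := exists_basic_subset hs f hf
    obtain ⟨ε, hε, hε1, hball⟩ := tube_lemma hX f hG hfG
    refine ⟨ε, hε, fun g hgd => hsub (hball g fun x => ?_)⟩
    have h1 : min (dist (f x) (g x)) 1 < ε := lt_of_le_of_lt (le_gDist f g x) hgd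
    rcases le_or_gt (dist (f x) (g x)) 1 with h | h
    · rwa [min_eq_left h] at h1
    · rw [min_eq_right h.le] at h1; linarith
  · intro h
    have hrw : s = ⋃₀ {u | (∃ G : Set (X × Y), IsOpen G ∧
        u = {g : C(X, Y) | graphSet g ⊆ G}) ∧ u ⊆ s} := by
      ext f
      constructor
      · intro hf
        obtain ⟨ε, hε, hball⟩ := h f hf
        set ε' := min ε 1 with hε'def
        have hε' : 0 < ε' := lt_min hε one_pos
        set G : Set (X × Y) := {p | dist p.2 (f p.1) < ε' / 2} with hGdef
        have hGopen : IsOpen G := by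
          have : Continuous fun p : X × Y => dist p.2 (f p.1) :=
            continuous_snd.dist (f.continuous.comp continuous_fst)
          exact isOpen_lt this continuous_const
        refine ⟨{g : C(X, Y) | graphSet g ⊆ G}, ⟨⟨G, hGopen, rfl⟩, ?_⟩, ?_⟩
        · intro g hg
          apply hball
          have hpt : ∀ x, dist (g x) (f x) < ε' / 2 := fun x =>
            graphSet_subset_iff.1 hg x
          have : gDist f g ≤ ε' / 2 := by
            refine Real.iSup_le (fun x => ?_) (by linarith)
            calc min (dist (f x) (g x)) 1 ≤ dist (f x) (g x) := min_le_left _ _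
              _ = dist (g x) (f x) := dist_comm _ _
              _ ≤ ε' / 2 := (hpt x).le
          have : gDist f g < ε' := lt_of_le_of_lt this (by linarith)
          exact lt_of_lt_of_le this (min_le_left _ _)
        · rw [mem_setOf_eq, graphSet_subset_iff]
          intro x
          simp only [hGdef, mem_setOf_eq]
          rw [dist_self]
          linarith
      · rintro ⟨u, ⟨_, hus⟩, hfu⟩
        exact hus hfu
    rw [hrw]
    refine @isOpen_sUnion _ (graphTopology X Y) _ ?_
    rintro u ⟨⟨G, hG, rfl⟩, _⟩
    exact isOpen_graph_basic hG

theorem metrizableSpace_graphTopology (hX : CountablyCompact X) :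
    @MetrizableSpace C(X, Y) (graphTopology X Y) := by
  letI : TopologicalSpace C(X, Y) := graphTopology X Y
  letI m : MetricSpace C(X, Y) :=
    MetricSpace.ofDistTopology gDist gDist_self gDist_comm gDist_triangle
      (fun s => isOpen_graphTopology_iff hX s) gDist_eq_zero
  exact (inferInstance : @MetrizableSpace C(X, Y) m.toUniformSpace.toTopologicalSpace)

end Metric

section Tightness

variable {X Y : Type*} [TopologicalSpace X] [T35Space X] [TopologicalSpace Y] [T2Space Y]

theorem countablyCompact_of_countableTightness
    (harc : ∃ g : ↥(Set.Icc (0 : ℝ) 1) → Y, Topology.IsEmbedding g)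
    (hct : @CountableTightness C(X, Y) (graphTopology X Y)) : CountablyCompact X := by
  classical
  obtain ⟨g, hg⟩ := harc
  letI : TopologicalSpace C(X, Y) := graphTopology X Y
  by_contra hcc
  unfold CountablyCompact at hcc
  push_neg at hcc
  obtain ⟨U, hUopen, hUcover, hUfin⟩ := hcc
  -- the increasing open "cover" V with no member equal to univ
  set V : ℕ → Set X := fun n => ⋃ k ∈ Finset.range (n + 1), U k with hV
  have hVopen : ∀ n, IsOpen (V n) := fun n => isOpen_biUnion fun k _ => hUopen k
  have hVmono : ∀ {n m : ℕ}, n ≤ m → V n ⊆ V m := by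
    intro n m hnm z hz
    obtain ⟨k, hk, hzk⟩ := mem_iUnion₂.1 hz
    exact mem_iUnion₂.2 ⟨k, Finset.mem_range.2
      (lt_of_lt_of_le (Finset.mem_range.1 hk) (by omega)), hzk⟩
  have hVne : ∀ n, ∃ z, z ∉ V n := fun n =>
    (ne_univ_iff_exists_notMem _).1 (hUfin (Finset.range (n + 1)))
  have hVcov : ∀ z : X, ∃ n, z ∈ V n := by
    intro z
    have hz : z ∈ ⋃ n, U n := hUcover ▸ mem_univ z
    obtain ⟨n, hn⟩ := mem_iUnion.1 hz
    exact ⟨n, mem_iUnion₂.2 ⟨n, Finset.self_mem_range_succ n, hn⟩⟩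
  choose c hc using hVne
  choose e he using hVcov
  -- the escaping sequence
  set M : ℕ → ℕ := fun k => Nat.rec 0 (fun _ Mk => max (Mk + 1) (e (c Mk))) k with hM
  have hMsucc : ∀ k, M (k + 1) = max (M k + 1) (e (c (M k))) := fun k => rfl
  have hMmono : StrictMono M := strictMono_nat_of_lt_succ fun k => by
    rw [hMsucc]; omega
  set xs : ℕ → X := fun k => c (M k) with hxs
  have hxsV : ∀ k, xs k ∉ V (M k) := fun k => hc (M k)
  have hmemV : ∀ j k, j < k → xs j ∈ V (M k) := by
    intro j k hjk
    have h1 : xs j ∈ V (e (c (M j))) := he (c (M j))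
    have h2 : e (c (M j)) ≤ M (j + 1) := by rw [hMsucc]; omega
    exact hVmono (h2.trans (hMmono.monotone hjk)) h1
  have hinj : Function.Injective xs := by
    intro j k hjk
    by_contra hne
    rcases lt_or_gt_of_ne hne with h | h
    · exact hxsV k (hjk ▸ hmemV j k h)
    · exact hxsV j (hjk.symm ▸ hmemV k j h)
  have hfin : ∀ z : X, ∃ O : Set X, IsOpen O ∧ z ∈ O ∧ {k | xs k ∈ O}.Finite := by
    intro z
    refine ⟨V (e z), hVopen _, he z, Set.Finite.subset (Set.finite_Iio (e z)) ?_⟩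
    intro k hk
    simp only [mem_setOf_eq] at hk
    by_contra hke
    simp only [mem_Iio, not_lt] at hke
    exact hxsV k (hVmono (hke.trans hMmono.le_apply) hk)
  have hsep : ∀ n : ℕ, ∃ O : Set X, IsOpen O ∧ xs n ∈ O ∧ ∀ m, m ≠ n → xs m ∉ O := by
    intro n
    obtain ⟨O, hO1, hO2, hO3⟩ := hfin (xs n)
    refine ⟨O \ (xs '' ({k | xs k ∈ O} \ {n})), hO1.sdiff ?_, ⟨hO2, ?_⟩, ?_⟩
    · exact Set.Finite.isClosed ((hO3.subset diff_subset).image xs)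
    · rintro ⟨k, ⟨_, hk2⟩, hk3⟩
      exact hk2 (hinj hk3)
    · rintro m hm ⟨hmO, hmim⟩
      exact hmim ⟨m, ⟨hmO, hm⟩, rfl⟩
  have hclosed : IsClosed (Set.range xs) := by
    rw [← isOpen_compl_iff, isOpen_iff_forall_mem_open]
    intro z hz
    obtain ⟨O, hO1, hO2, hO3⟩ := hfin z
    refine ⟨O \ (xs '' {k | xs k ∈ O}), ?_,
      hO1.sdiff (Set.Finite.isClosed (hO3.image xs)), ⟨hO2, ?_⟩⟩
    · rintro w ⟨hw1, hw2⟩ ⟨k, rfl⟩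
      exact hw2 ⟨k, hw1, rfl⟩
    · rintro ⟨k, _, hk⟩
      exact hz ⟨k, hk⟩
  -- arc data
  set zero : ↥(Set.Icc (0 : ℝ) 1) := ⟨0, by constructor <;> norm_num⟩ with hzero
  set f0 : C(X, Y) := ⟨fun _ => g zero, continuous_const⟩ with hf0
  set A : Set C(X, Y) := {F | ∃ H : C(X, ↥(Set.Icc (0 : ℝ) 1)),
    (∀ n, 0 < ((H (xs n) : ℝ))) ∧ ∀ z, F z = g (H z)} with hA
  -- f0 is in the closure of A
  have hclosureA : f0 ∈ closure A := by
    rw [mem_closure_iff]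
    intro o ho hf0o
    obtain ⟨G, hGopen, hGgraph, hGsub⟩ := exists_basic_subset ho f0 hf0o
    have hgraph0 : ∀ x : X, (x, g zero) ∈ G := fun x => graphSet_subset_iff.1 hGgraph x
    have htube : ∀ n : ℕ, ∃ ε : ℝ, 0 < ε ∧ ∃ W : Set X, IsOpen W ∧ xs n ∈ W ∧
        (∀ m, m ≠ n → xs m ∉ W) ∧
        ∀ x ∈ W, ∀ t : ↥(Set.Icc (0 : ℝ) 1), (t : ℝ) < ε → (x, g t) ∈ G := by
      intro n
      obtain ⟨O, hO1, hO2, hO3⟩ := hsep n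
      have hopen : IsOpen ((Prod.map (id : X → X) g) ⁻¹' G) :=
        hGopen.preimage (continuous_id.prodMap hg.continuous)
      have hmem0 : ((xs n, zero) : X × ↥(Set.Icc (0 : ℝ) 1)) ∈
          (Prod.map (id : X → X) g) ⁻¹' G := hgraph0 (xs n)
      rcases isOpen_prod_iff.1 hopen (xs n) zero hmem0 with ⟨a, b, ha, hb, hxa, hzb, hab⟩
      have hbnhds : b ∈ nhds zero := hb.mem_nhds hzb
      rw [nhds_subtype] at hbnhds
      obtain ⟨s, hs, hsb⟩ := Filter.mem_comap.1 hbnhds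
      obtain ⟨ε, hε, hball⟩ := Metric.mem_nhds_iff.1 hs
      refine ⟨ε, hε, a ∩ O, ha.inter hO1, ⟨hxa, hO2⟩,
        fun m hm hmem' => hO3 m hm hmem'.2, ?_⟩
      intro x hx t ht
      have htb : t ∈ b := by
        apply hsb
        apply hball
        simp only [Metric.mem_ball, Real.dist_eq]
        show |(t : ℝ) - (zero : ℝ)| < ε
        rw [show ((zero : ↥(Set.Icc (0:ℝ) 1)) : ℝ) = 0 from rfl, sub_zero,
          abs_of_nonneg t.2.1]
        exact ht
      exact hab (show ((x, t) : X × ↥(Set.Icc (0:ℝ) 1)) ∈ a ×ˢ b from ⟨hx.1, htb⟩)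
    choose ε hε W hWopen hxW hWsep hW using htube
    -- the decreasing sequence d
    set d : ℕ → ℝ := fun n =>
      Nat.rec (min (ε 0) 1) (fun n dn => min dn (min (ε (n + 1)) 1)) n with hd
    have hdsucc : ∀ n, d (n + 1) = min (d n) (min (ε (n + 1)) 1) := fun n => rfl
    have hdpos : ∀ n, 0 < d n := by
      intro n
      induction n with
      | zero => exact lt_min (hε 0) one_pos
      | succ n ih => rw [hdsucc]; exact lt_min ih (lt_min (hε (n + 1)) one_pos)
    have hdanti : ∀ {m n : ℕ}, m ≤ n → d n ≤ d m := by
      intro m n hmn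
      induction hmn with
      | refl => exact le_rfl
      | step h ih =>
          rename_i k hk
          exact le_trans (by rw [hdsucc]; exact min_le_left _ _) ih
    have hdle1 : ∀ n, d n ≤ 1 := by
      intro n
      cases n with
      | zero => exact min_le_right _ _
      | succ n => rw [hdsucc]; exact le_trans (min_le_right _ _) (min_le_right _ _)
    have hdleε : ∀ n, d n ≤ ε n := by
      intro n
      cases n with
      | zero => exact min_le_left _ _
      | succ n => rw [hdsucc]; exact le_trans (min_le_right _ _) (min_le_left _ _)
    -- bumps
    have hbump : ∀ n : ℕ, ∃ q : X → ℝ, Continuous q ∧ q (xs n) = 1 ∧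
        (∀ z, z ∉ W n → q z = 0) ∧ ∀ z, q z ∈ Set.Icc (0 : ℝ) 1 := by
      intro n
      obtain ⟨fI, hfc, hfx, hfK⟩ := CompletelyRegularSpace.completely_regular (xs n) (W n)ᶜ
        (isClosed_compl_iff.2 (hWopen n)) (by simp [hxW n])
      refine ⟨fun z => 1 - (fI z : ℝ), continuous_const.sub (continuous_subtype_val.comp hfc),
        ?_, ?_, ?_⟩
      · show (1 : ℝ) - (fI (xs n) : ℝ) = 1
        rw [hfx]
        norm_num
      · intro z hz
        show (1 : ℝ) - (fI z : ℝ) = 0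
        rw [hfK hz]
        norm_num
      · intro z
        simp only [Set.mem_Icc]
        have h1 : (0 : ℝ) ≤ (fI z : ℝ) := (fI z).2.1
        have h2 : (fI z : ℝ) ≤ 1 := (fI z).2.2
        constructor <;> linarith
    choose q hqc hq1 hq0 hq01 using hbump
    -- the function h = ∑ c_n q_n
    set cc : ℕ → ℝ := fun n => d n * (1 / 2) ^ (n + 2) with hcc
    have hccpos : ∀ n, 0 < cc n := fun n => mul_pos (hdpos n) (by positivity)
    have hccle : ∀ n, cc n ≤ (1 / 2) ^ (n + 2) := by
      intro n
      have h1 : (0:ℝ) ≤ (1 / 2) ^ (n + 2) := by positivity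
      calc cc n = d n * (1 / 2) ^ (n + 2) := rfl
        _ ≤ 1 * (1 / 2) ^ (n + 2) := mul_le_mul_of_nonneg_right (hdle1 n) h1
        _ = (1 / 2) ^ (n + 2) := one_mul _
    have hsumgeo : Summable (fun n : ℕ => ((1 : ℝ) / 2) ^ (n + 2)) := by
      have hs : Summable (fun n : ℕ => ((1 : ℝ) / 2) ^ n) :=
        summable_geometric_of_lt_one (by norm_num) (by norm_num)
      refine (hs.mul_right (((1 : ℝ) / 2) ^ 2)).congr fun n => ?_
      ring
    have htsumgeo : ∑' n : ℕ, ((1 : ℝ) / 2) ^ (n + 2) = 1 / 2 := by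
      have h2 : ∑' n : ℕ, ((1 : ℝ) / 2) ^ n = 2 := by
        rw [tsum_geometric_of_lt_one (by norm_num) (by norm_num)]; norm_num
      calc ∑' n : ℕ, ((1 : ℝ) / 2) ^ (n + 2)
          = ∑' n : ℕ, ((1 : ℝ) / 2) ^ n * ((1 : ℝ) / 2) ^ 2 := by
            congr 1; funext n; ring
        _ = (∑' n : ℕ, ((1 : ℝ) / 2) ^ n) * ((1 : ℝ) / 2) ^ 2 := tsum_mul_right
        _ = 1 / 2 := by rw [h2]; norm_num
    set h : X → ℝ := fun z => ∑' n, cc n * q n z with hh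
    have htermnn : ∀ n z, 0 ≤ cc n * q n z := fun n z =>
      mul_nonneg (hccpos n).le (hq01 n z).1
    have hterm_le : ∀ n z, cc n * q n z ≤ (1 / 2) ^ (n + 2) := by
      intro n z
      calc cc n * q n z ≤ cc n * 1 :=
            mul_le_mul_of_nonneg_left (hq01 n z).2 (hccpos n).le
        _ = cc n := mul_one _
        _ ≤ (1 / 2) ^ (n + 2) := hccle n
    have hterm_abs : ∀ n z, ‖cc n * q n z‖ ≤ (1 / 2) ^ (n + 2) := by
      intro n z
      rw [Real.norm_eq_abs, abs_of_nonneg (htermnn n z)]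
      exact hterm_le n z
    have hcont : Continuous h :=
      continuous_tsum (fun n => continuous_const.mul (hqc n)) hsumgeo hterm_abs
    have hsummable : ∀ z, Summable fun n => cc n * q n z := fun z =>
      Summable.of_nonneg_of_le (fun n => htermnn n z) (fun n => hterm_le n z) hsumgeo
    have hnonneg : ∀ z, 0 ≤ h z := fun z => tsum_nonneg fun n => htermnn n z
    have hhalf : ∀ z, h z ≤ 1 / 2 := by
      intro z
      calc h z ≤ ∑' n : ℕ, ((1 : ℝ) / 2) ^ (n + 2) :=
            Summable.tsum_le_tsum (fun n => hterm_le n z) (hsummable z) hsumgeo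
        _ = 1 / 2 := htsumgeo
    have hIcc : ∀ z, h z ∈ Set.Icc (0 : ℝ) 1 := fun z =>
      ⟨hnonneg z, (hhalf z).trans (by norm_num)⟩
    set HI : C(X, ↥(Set.Icc (0 : ℝ) 1)) :=
      ⟨fun z => ⟨h z, hIcc z⟩, hcont.subtype_mk _⟩ with hHI
    set FA : C(X, Y) := ⟨fun z => g (HI z), hg.continuous.comp HI.continuous⟩ with hFAdef
    have hhxs : ∀ n, h (xs n) = cc n := by
      intro n
      have hzero' : ∀ m : ℕ, m ≠ n → cc m * q m (xs n) = 0 := fun m hm => by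
        rw [hq0 m (xs n) (hWsep m n (Ne.symm hm)), mul_zero]
      rw [hh]
      simp only
      rw [tsum_eq_single n hzero', hq1 n, mul_one]
    have hFA_A : FA ∈ A := by
      refine ⟨HI, fun n => ?_, fun z => rfl⟩
      show (0 : ℝ) < h (xs n)
      rw [hhxs n]
      exact hccpos n
    refine ⟨FA, hGsub ?_, hFA_A⟩
    show graphSet FA ⊆ G
    rw [graphSet_subset_iff]
    intro z
    by_cases hz : ∀ n, q n z = 0
    · have hz0 : h z = 0 := by
        rw [hh]; simp only
        have : ∀ n : ℕ, cc n * q n z = 0 := fun n => by rw [hz n, mul_zero]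
        simp [this]
      have hHIz : HI z = zero := Subtype.ext (by simp [hHI, hz0, hzero])
      show (z, g (HI z)) ∈ G
      rw [hHIz]
      exact hgraph0 z
    · push_neg at hz
      have hn₀ := Nat.find_spec hz
      set n₀ := Nat.find hz with hn₀def
      have hzW : z ∈ W n₀ := by
        by_contra hzw
        exact hn₀ (hq0 n₀ z hzw)
      have hterm2 : ∀ n, cc n * q n z ≤ d n₀ * (1 / 2) ^ (n + 2) := by
        intro n
        rcases lt_or_ge n n₀ with h' | h'
        · have hqz : q n z = 0 := by
            by_contra hq
            exact (Nat.find_min hz h') hq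
          rw [hqz, mul_zero]
          exact mul_nonneg (hdpos n₀).le (by positivity)
        · calc cc n * q n z ≤ cc n * 1 :=
                mul_le_mul_of_nonneg_left (hq01 n z).2 (hccpos n).le
            _ = d n * (1 / 2) ^ (n + 2) := mul_one _
            _ ≤ d n₀ * (1 / 2) ^ (n + 2) :=
                mul_le_mul_of_nonneg_right (hdanti h') (by positivity)
      have hbound : h z ≤ d n₀ * (1 / 2) := by
        calc h z ≤ ∑' n : ℕ, d n₀ * ((1 : ℝ) / 2) ^ (n + 2) :=
              Summable.tsum_le_tsum hterm2 (hsummable z) (hsumgeo.mul_left (d n₀))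
          _ = d n₀ * (1 / 2) := by rw [tsum_mul_left, htsumgeo]
      have hlt : h z < ε n₀ := by nlinarith [hdpos n₀, hdleε n₀]
      exact hW n₀ z hzW (HI z) hlt
  -- the countable subset exclusion
  obtain ⟨B, hBA, hBc, hBcl⟩ := hct A f0 hclosureA
  rcases B.eq_empty_or_nonempty with hBe | hBne
  · rw [hBe, closure_empty] at hBcl
    exact hBcl
  obtain ⟨eB, hBeq⟩ := hBc.exists_eq_range hBne
  have heA : ∀ k, eB k ∈ A := fun k => hBA (hBeq ▸ mem_range_self k)
  choose Hk hHkpos hHkeq using heA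
  set δ : ℕ → ℝ := fun n => (Finset.range (n + 1)).inf'
    ⟨0, Finset.mem_range.2 (Nat.succ_pos n)⟩ (fun k => ((Hk k (xs n) : ℝ))) with hδ
  have hδpos : ∀ n, 0 < δ n := fun n => (Finset.lt_inf'_iff _).2 fun k _ => hHkpos k n
  have hδle : ∀ k, δ k ≤ (Hk k (xs k) : ℝ) := fun k =>
    Finset.inf'_le _ (Finset.self_mem_range_succ k)
  set K : ℕ → Set Y := fun n => g '' {t | δ n ≤ (t : ℝ)} with hK
  have hKclosed : ∀ n, IsClosed (K n) := by
    intro n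
    have hcl : IsClosed {t : ↥(Set.Icc (0 : ℝ) 1) | δ n ≤ (t : ℝ)} :=
      isClosed_le continuous_const continuous_subtype_val
    exact (hcl.isCompact.image hg.continuous).isClosed
  set S : Set (X × Y) := ⋃ n, ({xs n} : Set X) ×ˢ K n with hS
  have hSclosed : IsClosed S := by
    rw [← isOpen_compl_iff, isOpen_iff_forall_mem_open]
    rintro ⟨z, y⟩ hzy
    by_cases hz : z ∈ Set.range xs
    · obtain ⟨n, rfl⟩ := hz
      obtain ⟨O, hO1, hO2, hO3⟩ := hsep n
      have hy : y ∉ K n := by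
        intro hy
        exact hzy (mem_iUnion.2 ⟨n, ⟨rfl, hy⟩⟩)
      refine ⟨O ×ˢ (K n)ᶜ, ?_, hO1.prod (hKclosed n).isOpen_compl, ⟨hO2, hy⟩⟩
      rintro ⟨z', y'⟩ ⟨hz', hy'⟩ hmem
      obtain ⟨m, hm1, hm2⟩ := mem_iUnion.1 hmem
      have hmn : m = n := by
        by_contra hmn
        exact hO3 m hmn (hm1 ▸ hz')
      exact hy' (hmn ▸ hm2)
    · refine ⟨(Set.range xs)ᶜ ×ˢ (univ : Set Y), ?_,
        hclosed.isOpen_compl.prod isOpen_univ, ⟨hz, mem_univ y⟩⟩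
      rintro ⟨z', y'⟩ ⟨hz', _⟩ hmem
      obtain ⟨m, hm1, _⟩ := mem_iUnion.1 hmem
      exact hz' ⟨m, hm1.symm⟩
  have hf0G : graphSet f0 ⊆ Sᶜ := by
    rw [graphSet_subset_iff]
    intro x hxS
    obtain ⟨n, hn1, hn2⟩ := mem_iUnion.1 hxS
    obtain ⟨t, ht, hgt⟩ := hn2
    have ht0 : t = zero := hg.injective hgt
    rw [ht0] at ht
    exact absurd ht (not_le.2 (hδpos n))
  have hnotin : ∀ k, ¬ graphSet (eB k) ⊆ Sᶜ := by
    intro k hsub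
    have hmem : ((xs k, eB k (xs k)) : X × Y) ∈ graphSet (eB k) := rfl
    apply hsub hmem
    refine mem_iUnion.2 ⟨k, ⟨rfl, ?_⟩⟩
    rw [hHkeq k (xs k)]
    exact ⟨Hk k (xs k), hδle k, rfl⟩
  rw [mem_closure_iff] at hBcl
  obtain ⟨F, hF1, hF2⟩ := hBcl {f : C(X, Y) | graphSet f ⊆ Sᶜ}
    (isOpen_graph_basic hSclosed.isOpen_compl) hf0G
  rw [hBeq] at hF2
  obtain ⟨k, rfl⟩ := hF2
  exact hnotin k hF1

end Tightness

/-- for `X` Tychonoff and `Y` metrizable containing an arc (a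
subspace homeomorphic to `[0,1]`), the following are equivalent for
`(C(X,Y), τ_Γ)`: metrizable; first countable; Fréchet–Urysohn; countable
tightness; `X` countably compact. -/
theorem tfae_graphTopology_metrizable_of_arc (X Y : Type*) [TopologicalSpace X]
    [T35Space X] [TopologicalSpace Y] [MetrizableSpace Y]
    (harc : ∃ g : ↥(Set.Icc (0 : ℝ) 1) → Y, Topology.IsEmbedding g) :
    List.TFAE
      [ @MetrizableSpace C(X, Y) (graphTopology X Y),
        @FirstCountableTopology C(X, Y) (graphTopology X Y),
        @FrechetUrysohnSpace C(X, Y) (graphTopology X Y),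
        @CountableTightness C(X, Y) (graphTopology X Y),
        CountablyCompact X ] := by
  letI : TopologicalSpace C(X, Y) := graphTopology X Y
  tfae_have 1 → 2 := by
    intro h1
    haveI := h1
    exact inferInstance
  tfae_have 2 → 3 := by
    intro h2
    exact @FirstCountableTopology.frechetUrysohnSpace _ (graphTopology X Y) h2
  tfae_have 3 → 4 := by
    intro h3
    haveI := h3
    intro A z hz
    obtain ⟨u, hu, hlim⟩ := mem_closure_iff_seq_limit.1 hz
    exact ⟨Set.range u, range_subset_iff.2 hu, countable_range u,
      mem_closure_of_tendsto hlim (Filter.Eventually.of_forall fun n => mem_range_self n)⟩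
  tfae_have 4 → 5 := by
    intro h4
    exact countablyCompact_of_countableTightness harc h4
  tfae_have 5 → 1 := by
    intro h5
    letI : MetricSpace Y := TopologicalSpace.metrizableSpaceMetric Y
    exact metrizableSpace_graphTopology h5
  tfae_finish
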